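/- Let m ≥ 2 and define E(m) := (1/m)·∑_{k=2}^{m−1} (−1)ᵏ C(m−1,k)/m^{(k)} where m^{(k)} is the rising factorial. Then E(m) = e^{-1}/m − 1/m² + O(1/m³) as m → ∞; more precisely, |E(m) − e^{-1}/m + 1/m²| ≤ C/m³ for some absolute constant C and all m ≥ 2. -/

import Mathlib

open Finset

private lemma fact_bd1 (m : ℕ) (hm : 2 ≤ m) : m * (m + 1) ≤ 4 * m.factorial := by
  obtain ⟨n, rfl⟩ : ∃ n, m = n + 2 := ⟨m - 2, by omega⟩
  have h : 1 ≤ n.factorial := Nat.one_le_iff_ne_zero.mpr n.factorial_ne_zero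
  have h5 : (n+2).factorial = (n+2) * ((n+1) * n.factorial) := by
    rw [Nat.factorial_succ, Nat.factorial_succ]
  rw [h5]
  have h4 : (n+1) ≤ (n+1) * n.factorial := Nat.le_mul_of_pos_right _ n.factorial_pos
  calc (n+2) * (n+2+1) ≤ (n+2) * (4*(n+1)) := Nat.mul_le_mul_left _ (by omega)
    _ ≤ (n+2) * (4*((n+1)*n.factorial)) :=
        Nat.mul_le_mul_left _ (Nat.mul_le_mul_left _ h4)
    _ = 4 * ((n+2) * ((n+1)*n.factorial)) := by ring

private lemma fact_bd2 (m : ℕ) (hm : 2 ≤ m) : m ≤ 6 * (m - 2).factorial := by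
  have h1 := Nat.self_le_factorial (m - 2)
  have h2 : 1 ≤ (m-2).factorial := Nat.one_le_iff_ne_zero.mpr (m-2).factorial_ne_zero
  omega

private lemma pow4_bd (k : ℕ) : k ^ 4 * 3 ^ k ≤ 54 * (2 ^ k * k.factorial) := by
  rcases lt_or_ge k 4 with h | h
  · interval_cases k <;> decide
  · induction k, h using Nat.le_induction with
    | base => decide
    | succ n hn ih =>
      have h1 : 4 * (n + 1) ≤ 5 * n := by omega
      have h2 : (4*(n+1))^4 ≤ (5*n)^4 := Nat.pow_le_pow_left h1 4
      have h6 : 5 * n^4 ≤ (n+1) * n^4 := Nat.mul_le_mul_right _ (by omega)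
      have h3 : (n+1)^4 * 3 ≤ 2 * (n+1) * n^4 := by nlinarith [h2, h6]
      calc (n+1)^4 * 3^(n+1) = ((n+1)^4 * 3) * 3^n := by ring
        _ ≤ (2*(n+1)*n^4) * 3^n := Nat.mul_le_mul_right _ h3
        _ = 2*(n+1) * (n^4 * 3^n) := by ring
        _ ≤ 2*(n+1) * (54 * (2^n * n.factorial)) := Nat.mul_le_mul_left _ ih
        _ = 54 * (2^(n+1) * (n+1).factorial) := by rw [Nat.factorial_succ]; ring

private lemma pow4_real (k : ℕ) : ((k:ℝ))^4 / (k.factorial:ℝ) ≤ 54 * ((2:ℝ)/3) ^ k := by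
  have h := pow4_bd k
  have hR : ((k:ℝ))^4 * 3^k ≤ 54 * (2^k * (k.factorial:ℝ)) := by exact_mod_cast h
  have h3 : (0:ℝ) < 3^k := by positivity
  rw [div_le_iff₀ (by positivity : (0:ℝ) < (k.factorial:ℝ)), div_pow,
    show (54:ℝ) * (2^k / 3^k) * k.factorial = 54 * (2^k * (k.factorial:ℝ)) / 3^k by ring,
    le_div_iff₀ h3]
  linarith

private lemma geom_bd (n : ℕ) : ∑ k ∈ range n, ((2:ℝ)/3) ^ k ≤ 3 := by
  rw [geom_sum_eq (by norm_num) n]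
  have h1 : (0:ℝ) ≤ ((2:ℝ)/3) ^ n := by positivity
  rw [div_le_iff_of_neg (by norm_num : (2:ℝ)/3 - 1 < 0)]
  linarith

private lemma prod_bd (m : ℝ) (hm : 2 ≤ m) (k : ℕ) :
    |(∏ j ∈ range k, ((m - ((j:ℝ)+1)) / (m + j))) - (1 - (k:ℝ)^2 / m)| ≤ 2 * (k:ℝ)^4 / m^2 := by
  have hm0 : (0:ℝ) < m := by linarith
  induction k with
  | zero => simp [hm0.ne']
  | succ k ih =>
    have hk0 : (0:ℝ) ≤ (k:ℝ) := Nat.cast_nonneg k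
    have hmk : (0:ℝ) < m + k := by positivity
    rw [prod_range_succ]
    set r := ∏ j ∈ range k, ((m - ((j:ℝ)+1)) / (m + j)) with hr
    have key : r * ((m - ((k:ℝ)+1)) / (m + k)) - (1 - (((k:ℕ):ℝ)+1)^2 / m)
        = (r - (1 - (k:ℝ)^2/m)) * ((m - ((k:ℝ)+1)) / (m + k))
          + ((2*(k:ℝ)+1) * k * ((k:ℝ)+1)) / (m * (m + k)) := by
      field_simp
      ring
    push_cast
    rw [key]
    have h1 : |(r - (1 - (k:ℝ)^2/m)) * ((m - ((k:ℝ)+1)) / (m + k))| ≤ 2*(k:ℝ)^4/m^2 := by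
      rw [abs_mul]
      have hq : |(m - ((k:ℝ)+1)) / (m + k)| ≤ 1 := by
        rw [abs_div, abs_of_pos hmk, div_le_one hmk, abs_le]
        constructor <;> linarith
      calc |r - (1 - (k:ℝ)^2/m)| * |(m - ((k:ℝ)+1)) / (m + k)|
          ≤ (2*(k:ℝ)^4/m^2) * 1 := mul_le_mul ih hq (abs_nonneg _) (by positivity)
        _ = 2*(k:ℝ)^4/m^2 := by ring
    have h2 : |((2*(k:ℝ)+1) * k * ((k:ℝ)+1)) / (m * (m + k))|
        ≤ ((2*(k:ℝ)+1) * k * ((k:ℝ)+1)) / m^2 := by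
      rw [abs_div, abs_of_nonneg (by positivity), abs_of_pos (by positivity)]
      apply div_le_div_of_nonneg_left (by positivity) (by positivity)
      nlinarith
    calc |(r - (1 - (k:ℝ)^2/m)) * ((m - ((k:ℝ)+1)) / (m + k))
          + ((2*(k:ℝ)+1) * k * ((k:ℝ)+1)) / (m * (m + k))|
        ≤ |(r - (1 - (k:ℝ)^2/m)) * ((m - ((k:ℝ)+1)) / (m + k))|
          + |((2*(k:ℝ)+1) * k * ((k:ℝ)+1)) / (m * (m + k))| := abs_add_le _ _
      _ ≤ 2*(k:ℝ)^4/m^2 + ((2*(k:ℝ)+1) * k * ((k:ℝ)+1)) / m^2 := add_le_add h1 h2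
      _ ≤ 2*((k:ℝ)+1)^4/m^2 := by
          rw [← add_div, div_le_div_iff₀ (by positivity) (by positivity)]
          have h7 : (0:ℝ) ≤ (6*(k:ℝ)^3 + 9*(k:ℝ)^2 + 7*(k:ℝ) + 2) * m^2 := by positivity
          nlinarith [h7]

private lemma choose_cast (m k : ℕ) (hm : 1 ≤ m) (hk : k ≤ m - 1) :
    ((m-1).choose k : ℝ) * (k.factorial : ℝ) = ∏ j ∈ range k, ((m:ℝ) - ((j:ℝ)+1)) := by
  have h := Nat.descFactorial_eq_factorial_mul_choose (m-1) k
  have h2 : ((m-1).descFactorial k : ℝ) = ∏ j ∈ range k, ((m:ℝ) - ((j:ℝ)+1)) := by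
    rw [Nat.descFactorial_eq_prod_range, Nat.cast_prod]
    apply prod_congr rfl
    intro j hj
    have hj1 : j ≤ m - 1 := le_of_lt (lt_of_lt_of_le (mem_range.mp hj) hk)
    rw [Nat.cast_sub hj1, Nat.cast_sub hm]
    push_cast
    ring
  rw [← h2, h]
  push_cast
  ring

theorem stmt_16 :
    ∃ C : ℝ, 0 < C ∧ ∀ m : ℕ, 2 ≤ m →
      |(1 / (m : ℝ)) * ∑ k ∈ Finset.Icc 2 (m - 1), (-1 : ℝ) ^ k * ((m - 1).choose k) /
          (∏ i ∈ Finset.range k, ((m : ℝ) + i))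
        - Real.exp (-1) / m + 1 / (m : ℝ) ^ 2| ≤ C / (m : ℝ) ^ 3 := by
  refine ⟨400, by norm_num, ?_⟩
  intro m hm
  have hmR : (2:ℝ) ≤ (m:ℝ) := by exact_mod_cast hm
  have hm0 : (0:ℝ) < (m:ℝ) := by linarith
  have hIcoIcc : Ico 2 m = Icc 2 (m-1) := by
    rw [← Finset.Ico_add_one_right_eq_Icc]; congr 1; omega
  -- Step 1 : rewrite the sum
  have hsum : ∑ k ∈ Finset.Icc 2 (m - 1), (-1 : ℝ) ^ k * ((m - 1).choose k) /
          (∏ i ∈ Finset.range k, ((m : ℝ) + i))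
      = ∑ k ∈ Icc 2 (m-1),
          (-1:ℝ)^k * (∏ j ∈ range k, (((m:ℝ) - ((j:ℝ)+1)) / ((m:ℝ) + j))) / (k.factorial : ℝ) := by
    apply sum_congr rfl
    intro k hk
    obtain ⟨hk2, hkm⟩ := mem_Icc.mp hk
    have hdne : (∏ i ∈ range k, ((m:ℝ) + i)) ≠ 0 :=
      ne_of_gt (prod_pos fun i _ => by positivity)
    have hc : ((m-1).choose k : ℝ) = (∏ j ∈ range k, ((m:ℝ) - ((j:ℝ)+1))) / (k.factorial:ℝ) := by
      rw [eq_div_iff (by positivity : (k.factorial:ℝ) ≠ 0)]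
      exact choose_cast m k (by omega) hkm
    rw [hc, prod_div_distrib]
    field_simp
  rw [hsum]
  -- abbreviations
  set S := ∑ k ∈ Icc 2 (m-1),
      (-1:ℝ)^k * (∏ j ∈ range k, (((m:ℝ) - ((j:ℝ)+1)) / ((m:ℝ) + j))) / (k.factorial : ℝ) with hS
  set A := ∑ k ∈ Icc 2 (m-1), (-1:ℝ)^k / (k.factorial:ℝ) with hA
  set B := ∑ k ∈ Icc 2 (m-1), (-1:ℝ)^k * (k:ℝ)^2 / (k.factorial:ℝ) with hB
  -- Bound 1
  have hbd1 : |S - A + B / (m:ℝ)| ≤ 324 / (m:ℝ)^2 := by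
    have hsplit : S - A + B / (m:ℝ) = ∑ k ∈ Icc 2 (m-1),
        ((-1:ℝ)^k * ((∏ j ∈ range k, (((m:ℝ) - ((j:ℝ)+1)) / ((m:ℝ) + j)))
          - (1 - (k:ℝ)^2/(m:ℝ))) / (k.factorial:ℝ)) := by
      rw [hS, hA, hB, sum_div, ← sum_sub_distrib, ← sum_add_distrib]
      apply sum_congr rfl
      intro k hk
      have hkf : (k.factorial:ℝ) ≠ 0 := by positivity
      field_simp
      ring
    rw [hsplit]
    have habs := Finset.abs_sum_le_sum_abs
      (fun k => ((-1:ℝ)^k * ((∏ j ∈ range k, (((m:ℝ) - ((j:ℝ)+1)) / ((m:ℝ) + j)))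
          - (1 - (k:ℝ)^2/(m:ℝ))) / (k.factorial:ℝ))) (Icc 2 (m-1))
    refine habs.trans ?_
    have hterm : ∀ k ∈ Icc 2 (m-1),
        |(-1:ℝ)^k * ((∏ j ∈ range k, (((m:ℝ) - ((j:ℝ)+1)) / ((m:ℝ) + j)))
          - (1 - (k:ℝ)^2/(m:ℝ))) / (k.factorial:ℝ)|
        ≤ (108 / (m:ℝ)^2) * ((2:ℝ)/3)^k := by
      intro k _
      rw [abs_div, abs_mul, abs_pow, abs_neg, abs_one, one_pow, one_mul,
        abs_of_pos (by positivity : (0:ℝ) < (k.factorial:ℝ))]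
      have hp := prod_bd (m:ℝ) hmR k
      calc |(∏ j ∈ range k, (((m:ℝ) - ((j:ℝ)+1)) / ((m:ℝ) + j))) - (1 - (k:ℝ)^2/(m:ℝ))|
            / (k.factorial:ℝ)
          ≤ (2 * (k:ℝ)^4 / (m:ℝ)^2) / (k.factorial:ℝ) := by gcongr
        _ = (2/(m:ℝ)^2) * ((k:ℝ)^4 / (k.factorial:ℝ)) := by ring
        _ ≤ (2/(m:ℝ)^2) * (54 * ((2:ℝ)/3)^k) :=
            mul_le_mul_of_nonneg_left (pow4_real k) (by positivity)
        _ = (108 / (m:ℝ)^2) * ((2:ℝ)/3)^k := by ring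
    refine (sum_le_sum hterm).trans ?_
    rw [← mul_sum]
    have hsub : ∑ k ∈ Icc 2 (m-1), ((2:ℝ)/3)^k ≤ ∑ k ∈ range m, ((2:ℝ)/3)^k := by
      apply sum_le_sum_of_subset_of_nonneg
      · intro x hx
        rw [mem_range]
        have := mem_Icc.mp hx
        omega
      · intro i _ _
        positivity
    calc (108 / (m:ℝ)^2) * ∑ k ∈ Icc 2 (m-1), ((2:ℝ)/3)^k
        ≤ (108 / (m:ℝ)^2) * 3 :=
          mul_le_mul_of_nonneg_left (hsub.trans (geom_bd m)) (by positivity)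
      _ = 324 / (m:ℝ)^2 := by ring
  -- Bound 2
  have hArange : A = ∑ k ∈ range m, (-1:ℝ)^k / (k.factorial:ℝ) := by
    rw [hA, ← hIcoIcc, range_eq_Ico,
      ← Finset.sum_Ico_consecutive _ (by omega : (0:ℕ) ≤ 2) (by omega : 2 ≤ m)]
    have h02 : Ico 0 2 = ({0, 1} : Finset ℕ) := by decide
    rw [h02]
    norm_num [Nat.factorial]
  have hexpA : |A - Real.exp (-1)| ≤ 4 / (m:ℝ)^2 := by
    rw [hArange, abs_sub_comm]
    have h := Real.exp_bound (x := -1) (by norm_num) (n := m) (by omega)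
    rw [abs_neg, abs_one, one_pow, one_mul] at h
    refine h.trans ?_
    have hfR : (m:ℝ) * ((m:ℝ)+1) ≤ 4 * (m.factorial:ℝ) := by
      exact_mod_cast fact_bd1 m hm
    rw [div_le_div_iff₀ (by positivity) (by positivity)]
    push_cast
    nlinarith [mul_le_mul_of_nonneg_right hfR hm0.le]
  -- Bound 3
  have hm21 : m - 1 = (m - 2) + 1 := by omega
  have hBval : 1 - B = (-1:ℝ)^(m-2) / (((m-2).factorial):ℝ) := by
    have hre : B = (∑ i ∈ range (m-2), (-1:ℝ)^i / (i.factorial:ℝ))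
        + ∑ i ∈ range (m-2), (-1:ℝ)^i / (((i+1).factorial):ℝ) := by
      rw [hB, ← hIcoIcc, Finset.sum_Ico_eq_sum_range, show m - 2 = m - 2 from rfl,
        ← sum_add_distrib]
      apply sum_congr rfl
      intro i _
      have hf2 : (((2+i).factorial):ℝ) = ((i:ℝ)+2) * (((i:ℝ)+1) * (i.factorial:ℝ)) := by
        rw [show 2+i = i+1+1 from by omega, Nat.factorial_succ, Nat.factorial_succ]
        push_cast
        ring
      have hf1 : (((i+1).factorial):ℝ) = ((i:ℝ)+1) * (i.factorial:ℝ) := by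
        rw [Nat.factorial_succ]
        push_cast
        ring
      have hi0 : (i.factorial:ℝ) ≠ 0 := by positivity
      rw [hf2, hf1, pow_add]
      push_cast
      field_simp
      ring
    have hQ : ∑ i ∈ range (m-2), (-1:ℝ)^i / (((i+1).factorial):ℝ)
        = 1 - ∑ j ∈ range (m-1), (-1:ℝ)^j / (j.factorial:ℝ) := by
      rw [hm21, Finset.sum_range_succ']
      have hneg : ∀ i : ℕ, (-1:ℝ)^(i+1) / (((i+1).factorial):ℝ)
          = -((-1:ℝ)^i / (((i+1).factorial):ℝ)) := by
        intro i; rw [pow_succ]; ring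
      simp only [hneg, sum_neg_distrib]
      norm_num [Nat.factorial]
    rw [hre, hQ, hm21, Finset.sum_range_succ]
    ring
  have hB1 : |1 - B| ≤ 24 / (m:ℝ) := by
    rw [hBval, abs_div, abs_pow, abs_neg, abs_one, one_pow,
      abs_of_pos (by positivity : (0:ℝ) < (((m-2).factorial):ℝ))]
    rw [div_le_div_iff₀ (by positivity) hm0]
    have h6 : (m:ℝ) ≤ 6 * (((m-2).factorial):ℝ) := by exact_mod_cast fact_bd2 m hm
    have : (0:ℝ) ≤ (((m-2).factorial):ℝ) := by positivity
    linarith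
  -- Assembly
  have hfinal : |S - Real.exp (-1) + 1/(m:ℝ)| ≤ 352/(m:ℝ)^2 := by
    have hid : S - Real.exp (-1) + 1/(m:ℝ)
        = (S - A + B/(m:ℝ)) + (A - Real.exp (-1)) + (1 - B)/(m:ℝ) := by ring
    rw [hid]
    have h3 : |(1-B)/(m:ℝ)| ≤ 24/(m:ℝ)^2 := by
      rw [abs_div, abs_of_pos hm0]
      calc |1-B|/(m:ℝ) ≤ (24/(m:ℝ))/(m:ℝ) := by gcongr
        _ = 24/(m:ℝ)^2 := by ring
    calc |(S - A + B/(m:ℝ)) + (A - Real.exp (-1)) + (1 - B)/(m:ℝ)|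
        ≤ |(S - A + B/(m:ℝ)) + (A - Real.exp (-1))| + |(1 - B)/(m:ℝ)| := abs_add_le _ _
      _ ≤ (|S - A + B/(m:ℝ)| + |A - Real.exp (-1)|) + |(1 - B)/(m:ℝ)| :=
          add_le_add_left (abs_add_le _ _) _
      _ ≤ (324/(m:ℝ)^2 + 4/(m:ℝ)^2) + 24/(m:ℝ)^2 :=
          add_le_add (add_le_add hbd1 hexpA) h3
      _ = 352/(m:ℝ)^2 := by ring
  have hgoal : 1/(m:ℝ) * S - Real.exp (-1)/(m:ℝ) + 1/(m:ℝ)^2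
      = (S - Real.exp (-1) + 1/(m:ℝ))/(m:ℝ) := by
    field_simp
  rw [hgoal, abs_div, abs_of_pos hm0]
  calc |S - Real.exp (-1) + 1/(m:ℝ)|/(m:ℝ) ≤ (352/(m:ℝ)^2)/(m:ℝ) := by gcongr
    _ = 352/(m:ℝ)^3 := by ring
    _ ≤ 400/(m:ℝ)^3 := by gcongr <;> norm_num
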